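/- Let F be a finitely generated free group, let H ≤ F be a finitely generated subgroup, and let A ⊆ F be a finite subset disjoint from H. Then there exists a finite index subgroup G ≤ F with H ⊆ G and G ∩ A = ∅. -/

import Mathlib

noncomputable def extPerm {X : Type*} (e : Equiv.Perm X) (S : Set X) [Finite S] :
    Equiv.Perm (↥S ⊕ ↥S) := by
  classical
  refine Equiv.ofBijective
    (fun y => match y with
      | .inl s => if h : (e s : X) ∈ S then .inl ⟨e s, h⟩ else .inr s
      | .inr s => if h : (e.symm s : X) ∈ S then .inr ⟨e.symm s, h⟩ else .inl s) ?_
  rw [← Finite.injective_iff_bijective]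
  rintro (⟨s, hs⟩ | ⟨s, hs⟩) (⟨t, ht⟩ | ⟨t, ht⟩) h <;>
    simp only at h <;> split_ifs at h with h1 h2 <;>
    simp_all [Subtype.ext_iff] <;> (subst h; simp_all)

theorem extPerm_apply_inl {X : Type*} (e : Equiv.Perm X) (S : Set X) [Finite S]
    {s : X} (hs : s ∈ S) (hes : e s ∈ S) :
    extPerm e S (Sum.inl ⟨s, hs⟩) = Sum.inl ⟨e s, hes⟩ := by
  classical
  simp only [extPerm, Equiv.ofBijective_apply]
  exact dif_pos hes

/-- Marshall Hall's theorem: a finitely generated subgroup `H` of a finitely generated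
free group can be separated from any finite set `A` disjoint from `H` by a finite index
subgroup containing `H`. -/
theorem marshall_hall_separability (α : Type*) [Finite α]
    (H : Subgroup (FreeGroup α)) (hH : H.FG)
    (A : Set (FreeGroup α)) (hA : A.Finite) (hdisj : ∀ a ∈ A, a ∉ H) :
    ∃ G : Subgroup (FreeGroup α), G.index ≠ 0 ∧ H ≤ G ∧ ∀ a ∈ A, a ∉ G := by
  classical
  obtain ⟨T, hT⟩ := hH
  let X := FreeGroup α ⧸ H
  let W : Finset (FreeGroup α) := insert 1 (T ∪ hA.toFinset)
  let q : List (α × Bool) → X := fun t => QuotientGroup.mk (FreeGroup.mk t)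
  let S : Set X := ⋃ w ∈ (W : Set (FreeGroup α)), q '' {t | t ∈ w.toWord.tails}
  have hSfin : S.Finite :=
    Set.Finite.biUnion W.finite_toSet fun w _ => (List.finite_toSet _).image _
  haveI : Finite ↥S := hSfin.to_subtype
  have hmemS : ∀ w ∈ W, ∀ t ∈ w.toWord.tails, q t ∈ S := by
    intro w hw t ht
    exact Set.mem_biUnion hw ⟨t, ht, rfl⟩
  have h1S : q [] ∈ S := by
    refine hmemS 1 (Finset.mem_insert_self _ _) [] ?_
    simp [FreeGroup.toWord_one]
  let pt : ↥S ⊕ ↥S := Sum.inl ⟨q [], h1S⟩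
  let σ : α → Equiv.Perm (↥S ⊕ ↥S) := fun x => extPerm (MulAction.toPerm (FreeGroup.of x)) S
  let φ : FreeGroup α →* Equiv.Perm (↥S ⊕ ↥S) := FreeGroup.lift σ
  have hφof : ∀ x : α, φ (FreeGroup.of x) = σ x := fun x => FreeGroup.lift_apply_of
  have hact : ∀ (g u : FreeGroup α),
      MulAction.toPerm g (QuotientGroup.mk u : X) = QuotientGroup.mk (g * u) := by
    intro g u
    simp [MulAction.toPerm_apply]
  have key : ∀ l : List (α × Bool), (∀ t ∈ l.tails, q t ∈ S) →
      ∀ hl : q l ∈ S, φ (FreeGroup.mk l) pt = Sum.inl ⟨q l, hl⟩ := by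
    intro l
    induction l with
    | nil =>
      intro _ hl
      have h1 : FreeGroup.mk ([] : List (α × Bool)) = 1 := FreeGroup.one_eq_mk.symm
      simp only [h1, map_one, Equiv.Perm.coe_one, id_eq]
      rfl
    | cons a l ih =>
      obtain ⟨x, b⟩ := a
      intro htails hl
      have ht' : ∀ t ∈ l.tails, q t ∈ S := fun t ht =>
        htails t (by rw [List.tails_cons]; exact List.mem_cons_of_mem _ ht)
      have hlS : q l ∈ S := ht' l (by rw [List.mem_tails])
      have hstep : FreeGroup.mk ((x, b) :: l) = FreeGroup.mk [(x, b)] * FreeGroup.mk l := rfl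
      rw [hstep, map_mul, Equiv.Perm.mul_apply, ih ht' hlS]
      cases b with
      | true =>
        have hof : FreeGroup.mk [(x, true)] = FreeGroup.of x := rfl
        have hval : MulAction.toPerm (FreeGroup.of x) (q l) = q ((x, true) :: l) := by
          show MulAction.toPerm (FreeGroup.of x) (QuotientGroup.mk (FreeGroup.mk l)) = _
          rw [hact]
          rfl
        have hnext : MulAction.toPerm (FreeGroup.of x) (q l) ∈ S := by
          rw [hval]
          exact htails _ (by rw [List.mem_tails])
        rw [hof, hφof]
        rw [extPerm_apply_inl (MulAction.toPerm (FreeGroup.of x)) S hlS hnext]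
        exact congrArg Sum.inl (Subtype.ext hval)
      | false =>
        have hof : FreeGroup.mk [(x, false)] = (FreeGroup.of x)⁻¹ := by
          show _ = (FreeGroup.mk [(x, true)])⁻¹
          rw [FreeGroup.inv_mk]
          rfl
        have hcanc : FreeGroup.of x * FreeGroup.mk ((x, false) :: l) = FreeGroup.mk l := by
          have h2 : FreeGroup.mk ((x, false) :: l)
              = FreeGroup.mk [(x, false)] * FreeGroup.mk l := rfl
          rw [h2, hof, mul_inv_cancel_left]
        have hnext : MulAction.toPerm (FreeGroup.of x) (q ((x, false) :: l)) = q l := by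
          show MulAction.toPerm (FreeGroup.of x)
              (QuotientGroup.mk (FreeGroup.mk ((x, false) :: l))) = _
          rw [hact, hcanc]
        have hnextS : MulAction.toPerm (FreeGroup.of x) (q ((x, false) :: l)) ∈ S := by
          rw [hnext]; exact hlS
        rw [hof, map_inv, hφof]
        rw [Equiv.Perm.inv_def, Equiv.symm_apply_eq]
        rw [extPerm_apply_inl (MulAction.toPerm (FreeGroup.of x)) S hl hnextS]
        exact congrArg Sum.inl (Subtype.ext hnext.symm)
  have hcosetS : ∀ w ∈ W, (QuotientGroup.mk w : X) ∈ S := by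
    intro w hw
    have := hmemS w hw w.toWord (by rw [List.mem_tails])
    rwa [show q w.toWord = QuotientGroup.mk w from congrArg _ (FreeGroup.mk_toWord)] at this
  have keyW : ∀ w, ∀ hw : w ∈ W, φ w pt = Sum.inl ⟨QuotientGroup.mk w, hcosetS w hw⟩ := by
    intro w hw
    have h1 := key w.toWord (hmemS w hw) (hmemS w hw w.toWord (by rw [List.mem_tails]))
    rw [FreeGroup.mk_toWord] at h1
    rw [h1]
    exact congrArg Sum.inl (Subtype.ext (congrArg QuotientGroup.mk FreeGroup.mk_toWord))
  let G : Subgroup (FreeGroup α) :=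
    Subgroup.comap φ (MulAction.stabilizer (Equiv.Perm (↥S ⊕ ↥S)) pt)
  refine ⟨G, ?_, ?_, ?_⟩
  · rw [Subgroup.index_comap]
    exact Subgroup.index_ne_zero_of_finite
  · rw [← hT, Subgroup.closure_le]
    intro h hh
    have hhW : h ∈ W := Finset.mem_insert_of_mem (Finset.mem_union_left _ hh)
    show φ h ∈ MulAction.stabilizer (Equiv.Perm (↥S ⊕ ↥S)) pt
    rw [MulAction.mem_stabilizer_iff]
    show φ h pt = pt
    rw [keyW h hhW]
    have hh' : (QuotientGroup.mk h : X) = q [] := by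
      show _ = QuotientGroup.mk (FreeGroup.mk [])
      rw [← FreeGroup.one_eq_mk]
      exact (QuotientGroup.eq).mpr (by simpa using (hT ▸ Subgroup.subset_closure hh : h ∈ H))
    exact congrArg Sum.inl (Subtype.ext hh')
  · intro a ha haG
    have haW : a ∈ W := Finset.mem_insert_of_mem
      (Finset.mem_union_right _ (hA.mem_toFinset.mpr ha))
    have h1 : φ a pt = pt := haG
    rw [keyW a haW] at h1
    have h2 : (QuotientGroup.mk a : X) = q [] := by
      injection h1 with h1'
      exact congrArg Subtype.val h1'
    have haH : a ∈ H := by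
      have h3 : (QuotientGroup.mk a : X) = QuotientGroup.mk 1 := by
        rw [h2]
        show QuotientGroup.mk (FreeGroup.mk []) = _
        rw [← FreeGroup.one_eq_mk]
      simpa using (QuotientGroup.eq).mp h3
    exact hdisj a ha haH
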